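/- Fix b, c > 0 and set θ = b/c. Define π_i = e^{−θ} θ^i / ((1 − e^{−θ}) i!) for i ≥ 1 and π_0 = 0 (the law of a Poisson(θ) variable conditioned on being nonzero). Then Σ_{i≥1} π_i = 1, for every integer i ≥ 1 one has the stationarity (balance) equation b(i−1)π_{i−1} + c(i+1)i π_{i+1} = i(b + c(i−1)) π_i, and the mean satisfies Σ_{i≥1} i·π_i = θ/(1 − e^{−θ}). -/

import Mathlib

lemma exp_tsum (x : ℝ) : Real.exp x = ∑' n : ℕ, x ^ n / n.factorial := by
  rw [Real.exp_eq_exp_ℝ, NormedSpace.exp_eq_tsum_div]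

/-- For the (binary) logistic branching process with parameters (b, c, 0): the law of a
Poisson(θ) variable conditioned to be nonzero, `p i = e^{-θ} θ^i / ((1 - e^{-θ}) i!)` for
`i ≥ 1`, is a probability vector, it satisfies the stationarity (balance) equation
`b(i−1)p_{i−1} + c(i+1)i p_{i+1} = i(b + c(i−1)) p_i` for every `i ≥ 1`, and its mean is
`θ/(1 − e^{−θ})`, where `θ = b/c`. -/
theorem stmt_1 (b c : ℝ) (hb : 0 < b) (hc : 0 < c) (θ : ℝ) (hθ : θ = b / c)
    (p : ℕ → ℝ) (hp0 : p 0 = 0)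
    (hp : ∀ i : ℕ, 1 ≤ i →
      p i = Real.exp (-θ) * θ ^ i / ((1 - Real.exp (-θ)) * (Nat.factorial i : ℝ))) :
    (∑' i : ℕ, p i) = 1 ∧
    (∀ i : ℕ, 1 ≤ i →
      b * ((i : ℝ) - 1) * p (i - 1) + c * ((i : ℝ) + 1) * (i : ℝ) * p (i + 1)
        = (i : ℝ) * (b + c * ((i : ℝ) - 1)) * p i) ∧
    (∑' i : ℕ, (i : ℝ) * p i) = θ / (1 - Real.exp (-θ)) := by
  have hθpos : 0 < θ := hθ ▸ div_pos hb hc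
  have hcθ : c * θ = b := by rw [hθ]; field_simp [hc.ne']
  have hE : Real.exp (-θ) < 1 := by
    rw [Real.exp_lt_one_iff]; linarith
  have hD : (1 - Real.exp (-θ)) ≠ 0 := by linarith
  set A : ℝ := Real.exp (-θ) / (1 - Real.exp (-θ)) with hA
  have hfact : ∀ n : ℕ, (n.factorial : ℝ) ≠ 0 := fun n =>
    Nat.cast_ne_zero.2 (Nat.factorial_ne_zero n)
  have hpA : ∀ i : ℕ, 1 ≤ i → p i = A * (θ ^ i / i.factorial) := by
    intro i hi
    rw [hp i hi, hA]
    field_simp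
  -- summability of exp series
  have hsum : Summable (fun n : ℕ => θ ^ n / n.factorial : ℕ → ℝ) :=
    Real.summable_pow_div_factorial θ
  have hsumA : Summable (fun n : ℕ => A * (θ ^ n / n.factorial)) := hsum.mul_left A
  have hps : Summable p := by
    rw [← summable_nat_add_iff 1]
    exact ((summable_nat_add_iff 1).2 hsumA).congr
      (fun n => (hpA (n + 1) (by omega)).symm)
  have hexp : Real.exp θ = ∑' n : ℕ, θ ^ n / n.factorial := exp_tsum θ
  -- first sum
  have hS1 : (∑' i : ℕ, p i) = 1 := by
    have h1 : (∑' i : ℕ, p i) = p 0 + ∑' n : ℕ, p (n + 1) := Summable.tsum_eq_zero_add hps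
    have h2 : (∑' n : ℕ, A * (θ ^ n / n.factorial))
        = A * (θ ^ 0 / (Nat.factorial 0 : ℝ)) + ∑' n : ℕ, p (n + 1) := by
      rw [Summable.tsum_eq_zero_add hsumA]
      congr 1
      exact tsum_congr fun n => (hpA (n + 1) (by omega)).symm
    have h3 : (∑' n : ℕ, A * (θ ^ n / n.factorial)) = A * Real.exp θ := by
      rw [hexp, tsum_mul_left]
    have hAe : A * Real.exp θ - A = 1 := by
      rw [hA]
      field_simp
      rw [mul_sub, ← Real.exp_add]
      simp
    rw [h1, hp0, zero_add]
    have := h2.symm.trans h3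
    simp only [pow_zero, Nat.factorial_zero, Nat.cast_one, div_one, mul_one] at this
    linarith
  refine ⟨hS1, ?_, ?_⟩
  · -- balance equation
    intro i hi
    rcases Nat.exists_eq_add_of_le hi with ⟨k, rfl⟩
    rcases k with _ | j
    · -- i = 1
      simp only [Nat.add_zero] at *
      rw [hpA 2 (by omega), hpA 1 (by omega), hp0, ← hcθ]
      norm_num [Nat.factorial]
      ring
    · -- i = j + 2
      have h1 : (1 + (j + 1)) - 1 = j + 1 := by omega
      rw [h1, hpA (j + 1) (by omega), hpA (1 + (j + 1)) (by omega),
        hpA (1 + (j + 1) + 1) (by omega)]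
      have e1 : 1 + (j + 1) = j + 2 := by omega
      rw [e1]
      have hf1 : ((j + 2).factorial : ℝ) = (j + 2) * (j + 1).factorial := by
        rw [Nat.factorial_succ]; push_cast; ring
      have hf2 : ((j + 3).factorial : ℝ) = (j + 3) * (j + 2) * (j + 1).factorial := by
        show ((j + 2 + 1).factorial : ℝ) = _
        rw [Nat.factorial_succ, Nat.factorial_succ]; push_cast; ring
      have hp3 : θ ^ (j + 3) = θ * θ * θ ^ (j + 1) := by ring
      have hp2 : θ ^ (j + 2) = θ * θ ^ (j + 1) := by ring
      have e2 : j + 2 + 1 = j + 3 := by omega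
      rw [e2, hf1, hf2, hp3, hp2]
      have hj1 : ((j + 1).factorial : ℝ) ≠ 0 := hfact _
      have hj2 : (j : ℝ) + 2 ≠ 0 := by positivity
      have hj3 : (j : ℝ) + 3 ≠ 0 := by positivity
      rw [← hcθ]
      push_cast
      field_simp
      ring
  · -- mean
    have hq : ∀ n : ℕ, ((n + 1 : ℕ) : ℝ) * p (n + 1) = A * θ * (θ ^ n / n.factorial) := by
      intro n
      rw [hpA (n + 1) (by omega)]
      have : ((n + 1).factorial : ℝ) = (n + 1) * n.factorial := by
        rw [Nat.factorial_succ]; push_cast; ring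
      rw [this]
      have h1 : ((n : ℝ) + 1) ≠ 0 := by positivity
      push_cast
      field_simp
      ring
    have hsumq : Summable (fun n : ℕ => ((n : ℝ)) * p n) := by
      rw [← summable_nat_add_iff 1]
      exact (hsum.mul_left (A * θ)).congr fun n => by
        exact_mod_cast (hq n).symm
    have h1 : (∑' i : ℕ, (i : ℝ) * p i)
        = (0 : ℝ) * p 0 + ∑' n : ℕ, ((n + 1 : ℕ) : ℝ) * p (n + 1) := by
      rw [Summable.tsum_eq_zero_add hsumq]; norm_num
    rw [h1, hp0]
    rw [tsum_congr hq, tsum_mul_left, ← hexp]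
    have hee : Real.exp (-θ) * Real.exp θ = 1 := by
      rw [← Real.exp_add]; simp
    rw [hA, zero_mul, zero_add]
    field_simp
    linear_combination hee
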